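/- Let E be a finite-dimensional real normed algebra containing a subring 𝓔 that is a free Z-module of rank t with basis τ₁,...,τ_t, and assume λ := min{|a| : a ∈ 𝓔, a ≠ 0} > 0. Then there is a constant C > 0 (depending only on 𝓔, τ, n) and an integer Q₀ ≥ 2 (depending only on 𝓔) such that for every integer Q ≥ Q₀ and every nonzero vector ā = (a₁,...,a_n) ∈ 𝓔^n there exist an integer b and a vector b̄ = (b₁,...,b_n) ∈ 𝓔^n satisfying: (i) 1 ≤ b < Q^{nt}; (ii) |b̄| ≤ C·b and b ≤ C·|b̄|; (iii) |ā/|ā| − b̄/b| ≤ C/(Q·b), where |ā| denotes the maximum of the norms |a_i|. -/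
import Mathlib

set_option maxHeartbeats 1000000

theorem dirichlet_sim {ι : Type*} [Fintype ι] (M : ℕ) (hM : 0 < M) (x : ι → ℝ) :
    ∃ q : ℕ, 1 ≤ q ∧ q ≤ M ^ (Fintype.card ι) ∧
      ∃ p : ι → ℤ, ∀ k, |(q : ℝ) * x k - p k| ≤ 1 / M := by
  classical
  set N := M ^ (Fintype.card ι) with hN
  have hbound : ∀ (j : ℕ) (k : ι),
      0 ≤ ⌊(M : ℝ) * Int.fract ((j : ℝ) * x k)⌋ ∧
      ⌊(M : ℝ) * Int.fract ((j : ℝ) * x k)⌋ < (M : ℤ) := by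
    intro j k
    constructor
    · exact Int.floor_nonneg.2 (mul_nonneg (by positivity) (Int.fract_nonneg _))
    · rw [Int.floor_lt]
      push_cast
      calc (M : ℝ) * Int.fract ((j : ℝ) * x k) < (M : ℝ) * 1 := by
            exact mul_lt_mul_of_pos_left (Int.fract_lt_one _) (by exact_mod_cast hM)
        _ = M := mul_one _
  set f : Fin (N + 1) → (ι → Fin M) := fun j k =>
    ⟨(⌊(M : ℝ) * Int.fract ((j : ℝ) * x k)⌋).toNat, by
      have := hbound j k; omega⟩ with hf
  have hcard : Fintype.card (ι → Fin M) < Fintype.card (Fin (N + 1)) := by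
    simp [Fintype.card_fun, hN]
  obtain ⟨j₁, j₂, hne, heq⟩ := Fintype.exists_ne_map_eq_of_card_lt f hcard
  wlog hlt : (j₁ : ℕ) < (j₂ : ℕ) generalizing j₁ j₂
  · exact this j₂ j₁ hne.symm heq.symm (by omega)
  refine ⟨(j₂ : ℕ) - (j₁ : ℕ), by omega, by omega,
    fun k => ⌊((j₂ : ℕ) : ℝ) * x k⌋ - ⌊((j₁ : ℕ) : ℝ) * x k⌋, fun k => ?_⟩
  have hfloor : ⌊(M : ℝ) * Int.fract (((j₁ : ℕ) : ℝ) * x k)⌋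
      = ⌊(M : ℝ) * Int.fract (((j₂ : ℕ) : ℝ) * x k)⌋ := by
    have := congrFun heq k
    have h1 := hbound (j₁ : ℕ) k
    have h2 := hbound (j₂ : ℕ) k
    simp only [hf, Fin.mk.injEq] at this
    omega
  have habs := Int.abs_sub_lt_one_of_floor_eq_floor hfloor
  have hMR : (0 : ℝ) < M := by exact_mod_cast hM
  have key : |Int.fract (((j₂ : ℕ) : ℝ) * x k) - Int.fract (((j₁ : ℕ) : ℝ) * x k)| ≤ 1 / M := by
    rw [← mul_sub, abs_mul, abs_of_pos hMR] at habs
    rw [abs_sub_comm] at habs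
    rw [le_div_iff₀ hMR, mul_comm]
    exact habs.le
  have hcast : (((j₂ : ℕ) - (j₁ : ℕ) : ℕ) : ℝ) = ((j₂ : ℕ) : ℝ) - ((j₁ : ℕ) : ℝ) := by
    push_cast [Nat.cast_sub hlt.le]; ring
  calc |(((j₂ : ℕ) - (j₁ : ℕ) : ℕ) : ℝ) * x k -
        ((⌊((j₂ : ℕ) : ℝ) * x k⌋ - ⌊((j₁ : ℕ) : ℝ) * x k⌋ : ℤ) : ℝ)|
      = |Int.fract (((j₂ : ℕ) : ℝ) * x k) - Int.fract (((j₁ : ℕ) : ℝ) * x k)| := by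
        rw [hcast]; push_cast; unfold Int.fract; ring_nf
    _ ≤ 1 / M := key

/-- Let `E` be a finite-dimensional real normed algebra containing a
subring `𝓔` which is a free `ℤ`-module of rank `t` with basis `τ₁, …, τ_t`, and assume
`λ := min {‖a‖ : a ∈ 𝓔, a ≠ 0} > 0`.  Then there are a constant `C > 0` and an integer
`Q₀ ≥ 2` such that for every integer `Q ≥ Q₀` and every nonzero `ā = (a₁, …, a_n) ∈ 𝓔^n`
there exist an integer `b` and `b̄ = (b₁, …, b_n) ∈ 𝓔^n` with
(i) `1 ≤ b < Q^{nt}`; (ii) `|b̄| ≤ C·b` and `b ≤ C·|b̄|`;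
(iii) `|ā/|ā| − b̄/b| ≤ C/(Q·b)`, where `|ā| = max_i ‖a_i‖` (the sup norm on `E^n`). -/
theorem stmt_2 {E : Type*} [NormedRing E] [NormedAlgebra ℝ E] [FiniteDimensional ℝ E]
    (𝓔 : Subring E) {t : ℕ} (τ : Fin t → E)
    (hτmem : ∀ j, τ j ∈ 𝓔)
    (hspan : ∀ a ∈ 𝓔, ∃ α : Fin t → ℤ, a = ∑ j, α j • τ j)
    (hind : LinearIndependent ℤ τ)
    (lam : ℝ) (hlam : 0 < lam)
    (hmin : ∀ a ∈ 𝓔, a ≠ 0 → lam ≤ ‖a‖)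
    (hmin' : ∃ a ∈ 𝓔, a ≠ 0 ∧ ‖a‖ = lam)
    (n : ℕ) (hn : 0 < n) :
    ∃ (C : ℝ) (Q₀ : ℕ), 0 < C ∧ 2 ≤ Q₀ ∧
      ∀ Q : ℕ, Q₀ ≤ Q →
        ∀ a : Fin n → E, (∀ i, a i ∈ 𝓔) → a ≠ 0 →
          ∃ (b : ℕ) (bb : Fin n → E), (∀ i, bb i ∈ 𝓔) ∧
            1 ≤ b ∧ b < Q ^ (n * t) ∧
            ‖bb‖ ≤ C * b ∧ (b : ℝ) ≤ C * ‖bb‖ ∧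
            ‖‖a‖⁻¹ • a - (b : ℝ)⁻¹ • bb‖ ≤ C / (Q * b) := by
  classical
  set S : ℝ := ∑ j, ‖τ j‖ with hS
  have hS0 : 0 ≤ S := Finset.sum_nonneg fun j _ => norm_nonneg _
  refine ⟨2 * S + 2, ⌈4 * S⌉₊ + 4, by positivity, by omega, ?_⟩
  intro Q hQ a hamem hane
  -- basic facts about Q
  have hQ4 : 4 ≤ Q := by omega
  have hSQ : 4 * S ≤ (⌈4 * S⌉₊ : ℝ) := Nat.le_ceil _
  have hSQ' : 2 * S ≤ (Q : ℝ) - 1 := by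
    have : (⌈4 * S⌉₊ : ℝ) + 4 ≤ (Q : ℝ) := by exact_mod_cast hQ
    nlinarith
  set M : ℕ := Q - 1 with hM
  have hM0 : 0 < M := by omega
  have hMR : (0 : ℝ) < M := by exact_mod_cast hM0
  have hMQ : (M : ℝ) = (Q : ℝ) - 1 := by
    have : (1 : ℕ) ≤ Q := by omega
    push_cast [hM, Nat.cast_sub this]; ring
  -- a is nonzero: some component nonzero, norm positive
  have hapos : 0 < ‖a‖ := norm_pos_iff.2 hane
  obtain ⟨i₀, hi₀⟩ := Function.ne_iff.1 hane
  -- coordinates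
  choose α hα using fun i => hspan (a i) (hamem i)
  have ht0 : 0 < t := by
    by_contra h
    apply hi₀
    rw [hα i₀]
    have : (Finset.univ : Finset (Fin t)) = ∅ := by
      have : t = 0 := by omega
      subst this; rfl
    simp [this]
  -- Dirichlet
  obtain ⟨q, hq1, hqle, p, hp⟩ := dirichlet_sim (ι := Fin n × Fin t) M hM0
    (fun k => ‖a‖⁻¹ * (α k.1 k.2 : ℝ))
  rw [Fintype.card_prod, Fintype.card_fin, Fintype.card_fin] at hqle
  have hqR : (0 : ℝ) < q := by exact_mod_cast hq1
  set bb : Fin n → E := fun i => ∑ j, (p (i, j)) • τ j with hbb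
  have hbbmem : ∀ i, bb i ∈ 𝓔 := fun i =>
    Subring.sum_mem _ fun j _ => Subring.zsmul_mem _ (hτmem j) _
  -- componentwise difference
  have hcomp : ∀ i, (q : ℝ) • (‖a‖⁻¹ • a i) - bb i
      = ∑ j, ((q : ℝ) * (‖a‖⁻¹ * (α i j : ℝ)) - ((p (i, j) : ℤ) : ℝ)) • τ j := by
    intro i
    rw [hα i, Finset.smul_sum, Finset.smul_sum, hbb, ← Finset.sum_sub_distrib]
    refine Finset.sum_congr rfl fun j _ => ?_
    rw [sub_smul]
    congr 1
    · rw [← Int.cast_smul_eq_zsmul ℝ (α i j) (τ j), smul_smul, smul_smul, mul_assoc]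
    · rw [← Int.cast_smul_eq_zsmul ℝ (p (i, j)) (τ j)]
  have hcompn : ∀ i, ‖(q : ℝ) • (‖a‖⁻¹ • a i) - bb i‖ ≤ S / M := by
    intro i
    rw [hcomp i]
    calc ‖∑ j, ((q : ℝ) * (‖a‖⁻¹ * (α i j : ℝ)) - ((p (i, j) : ℤ) : ℝ)) • τ j‖
        ≤ ∑ j, ‖((q : ℝ) * (‖a‖⁻¹ * (α i j : ℝ)) - ((p (i, j) : ℤ) : ℝ)) • τ j‖ :=
          norm_sum_le _ _
      _ ≤ ∑ j, (1 / M) * ‖τ j‖ := by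
          refine Finset.sum_le_sum fun j _ => ?_
          rw [norm_smul, Real.norm_eq_abs]
          exact mul_le_mul_of_nonneg_right (hp (i, j)) (norm_nonneg _)
      _ = S / M := by rw [← Finset.mul_sum, ← hS]; ring
  -- full norm of the difference
  have hDn : ‖(q : ℝ) • (‖a‖⁻¹ • a) - bb‖ ≤ S / M := by
    rw [pi_norm_le_iff_of_nonneg (by positivity)]
    intro i
    exact hcompn i
  have hSM : S / M ≤ 1 / 2 := by
    rw [div_le_div_iff₀ hMR (by norm_num)]
    rw [hMQ]; linarith
  have hu1 : ‖(‖a‖⁻¹ • a)‖ = 1 := by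
    rw [norm_smul, Real.norm_eq_abs, abs_of_pos (by positivity)]
    field_simp
  have hqu : ‖(q : ℝ) • (‖a‖⁻¹ • a)‖ = (q : ℝ) := by
    rw [norm_smul, hu1, Real.norm_eq_abs, abs_of_pos hqR, mul_one]
  refine ⟨q, bb, hbbmem, hq1, ?_, ?_, ?_, ?_⟩
  · -- q < Q ^ (n * t)
    calc q ≤ M ^ (n * t) := hqle
      _ < Q ^ (n * t) := by
          apply Nat.pow_lt_pow_left (by omega)
          positivity
  · -- ‖bb‖ ≤ C * q
    have : ‖bb‖ ≤ ‖(q : ℝ) • (‖a‖⁻¹ • a)‖ + ‖(q : ℝ) • (‖a‖⁻¹ • a) - bb‖ := by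
      have := norm_sub_norm_le ((q : ℝ) • (‖a‖⁻¹ • a)) bb
      have h2 := norm_sub_rev ((q : ℝ) • (‖a‖⁻¹ • a)) bb
      nlinarith [abs_norm_sub_norm_le ((q : ℝ) • (‖a‖⁻¹ • a)) bb,
        abs_le.1 (abs_norm_sub_norm_le ((q : ℝ) • (‖a‖⁻¹ • a)) bb)]
    rw [hqu] at this
    have hq1R : (1 : ℝ) ≤ q := by exact_mod_cast hq1
    nlinarith
  · -- q ≤ C * ‖bb‖
    have h1 : (q : ℝ) - ‖bb‖ ≤ S / M := by
      have := norm_sub_norm_le ((q : ℝ) • (‖a‖⁻¹ • a)) bb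
      rw [hqu] at this
      linarith [hDn]
    have hq1R : (1 : ℝ) ≤ q := by exact_mod_cast hq1
    have hbbn : (q : ℝ) / 2 ≤ ‖bb‖ := by linarith
    nlinarith [norm_nonneg bb]
  · -- approximation
    have key : ‖a‖⁻¹ • a - (q : ℝ)⁻¹ • bb
        = (q : ℝ)⁻¹ • ((q : ℝ) • (‖a‖⁻¹ • a) - bb) := by
      rw [smul_sub, smul_smul, inv_mul_cancel₀ (ne_of_gt hqR), one_smul]
    rw [key, norm_smul, Real.norm_eq_abs, abs_of_pos (by positivity)]
    have hQR : (0 : ℝ) < Q := by positivity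
    have step : S / M ≤ (2 * S + 2) / Q := by
      rw [div_le_div_iff₀ hMR hQR, hMQ]
      have h1 : 0 ≤ S * (Q : ℝ) := mul_nonneg hS0 hQR.le
      have hQ4' : (4 : ℝ) ≤ Q := by exact_mod_cast hQ4
      nlinarith
    set r : ℝ := ‖(q : ℝ) • (‖a‖⁻¹ • a) - bb‖ with hr
    have hr2 : r ≤ (2 * S + 2) / Q := le_trans hDn step
    have h3 : (q : ℝ)⁻¹ * r ≤ (q : ℝ)⁻¹ * ((2 * S + 2) / Q) :=
      mul_le_mul_of_nonneg_left hr2 (by positivity)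
    have heq : (q : ℝ)⁻¹ * ((2 * S + 2) / Q) = (2 * S + 2) / (Q * q) := by
      rw [← div_div, div_eq_mul_inv ((2 * S + 2) / (Q : ℝ)), mul_comm]
    linarith
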